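/- Suppose V = ⊕_{n∈ℤ} V_n is a ℤ-graded L-module of the intermediate series on which t1^1 ∘ t1^{-1} acts nondegenerately. Then dim V_n = 1 for all n ∈ ℤ, and there exist λ ∈ ℂ* and a basis {v_k ∈ V_k : k ∈ ℤ} such that t1^{±1}.v_k = λ v_{k±1} for all k. -/

import Mathlib

private def natProdAux (g : ℤ → ℂ) : ℕ → ℂ
  | 0 => 1
  | n + 1 => g n * natProdAux g n

private noncomputable def zprodAux (g : ℤ → ℂ) : ℤ → ℂ
  | Int.ofNat n => natProdAux g n
  | Int.negSucc n => (natProdAux (fun j => g (-(j : ℤ) - 1)) (n + 1))⁻¹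

private lemma natProdAux_ne_zero (g : ℤ → ℂ) (hg : ∀ k, g k ≠ 0) :
    ∀ n, natProdAux g n ≠ 0
  | 0 => one_ne_zero
  | n + 1 => mul_ne_zero (hg n) (natProdAux_ne_zero g hg n)

private lemma zprodAux_ne_zero (g : ℤ → ℂ) (hg : ∀ k, g k ≠ 0) (k : ℤ) :
    zprodAux g k ≠ 0 := by
  cases k with
  | ofNat n => exact natProdAux_ne_zero g hg n
  | negSucc n =>
    exact inv_ne_zero (natProdAux_ne_zero _ (fun k => hg _) (n + 1))

private lemma zprodAux_succ (g : ℤ → ℂ) (hg : ∀ k, g k ≠ 0) (k : ℤ) :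
    zprodAux g (k + 1) = g k * zprodAux g k := by
  cases k with
  | ofNat n =>
    have h : (Int.ofNat n) + 1 = Int.ofNat (n + 1) := rfl
    rw [h]
    show natProdAux g (n + 1) = g (Int.ofNat n) * natProdAux g n
    rfl
  | negSucc n =>
    cases n with
    | zero =>
      have h : (Int.negSucc 0) + 1 = (0 : ℤ) := rfl
      rw [h]
      show natProdAux g 0 = g (Int.negSucc 0) * (natProdAux (fun j => g (-(j : ℤ) - 1)) 1)⁻¹
      have h1 : natProdAux (fun j => g (-(j : ℤ) - 1)) 1 = g (-1) * 1 := rfl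
      have h2 : (Int.negSucc 0) = (-1 : ℤ) := rfl
      rw [h1, h2]
      show (1 : ℂ) = g (-1) * (g (-1) * 1)⁻¹
      field_simp
      exact (div_self (hg _)).symm
    | succ n =>
      have h : (Int.negSucc (n + 1)) + 1 = Int.negSucc n := rfl
      rw [h]
      show (natProdAux (fun j => g (-(j : ℤ) - 1)) (n + 1))⁻¹
        = g (Int.negSucc (n + 1)) * (natProdAux (fun j => g (-(j : ℤ) - 1)) (n + 2))⁻¹
      have h1 : natProdAux (fun j => g (-(j : ℤ) - 1)) (n + 2)
          = g (-(n + 1 : ℤ) - 1) * natProdAux (fun j => g (-(j : ℤ) - 1)) (n + 1) := by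
        show natProdAux (fun j => g (-(j : ℤ) - 1)) ((n + 1) + 1) = _
        rfl
      have h2 : (Int.negSucc (n + 1)) = (-(n + 1 : ℤ) - 1) := by
        rw [Int.negSucc_eq]; push_cast; ring
      rw [h1, h2]
      have hP := natProdAux_ne_zero (fun j => g (-(j : ℤ) - 1)) (fun k => hg _) (n + 1)
      field_simp
      rw [div_self (hg _)]

/-- If `t1^1 ∘ t1^{-1}` acts nondegenerately on the nonzero module `V`, then `dim V_n = 1` for all `n`, and there are `λ ∈ ℂ*` and a basis `v_k ∈ V_k` with `t1^{±1}.v_k = λ v_{k±1}`. -/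
theorem stmt_12_thm
    (q : ℂ) (hq0 : q ≠ 0) (hq : ∀ n : ℕ, 0 < n → q ^ n ≠ 1)
    (V : Type*) [AddCommGroup V] [Module ℂ V]
    (Vn : ℤ → Submodule ℂ V) (hdirect : DirectSum.IsInternal Vn)
    (ρ : ℤ × ℤ → V →ₗ[ℂ] V)
    (hbr : ∀ p r : ℤ × ℤ, p ≠ (0, 0) → r ≠ (0, 0) →
      ρ p ∘ₗ ρ r - ρ r ∘ₗ ρ p =
        if p + r = (0, 0) then 0
        else (q ^ (p.2 * r.1) - q ^ (p.1 * r.2)) • ρ (p + r))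
    (hgr : ∀ (p : ℤ × ℤ) (n : ℤ), p ≠ (0, 0) → ∀ v ∈ Vn n, ρ p v ∈ Vn (n + p.1))
    (hdim : ∀ n : ℤ, Module.rank ℂ (Vn n) ≤ 1)
    (hVne : ∃ n : ℤ, Vn n ≠ ⊥)
    (hnd : ∀ (n : ℤ) (v : V), v ∈ Vn n → v ≠ 0 → ρ (1, 0) (ρ (-1, 0) v) ≠ 0) :
    (∀ n : ℤ, Module.rank ℂ (Vn n) = 1) ∧
    ∃ lam : ℂ, lam ≠ 0 ∧ ∃ v : ℤ → V,
      (∀ k, v k ∈ Vn k) ∧ (∀ k, v k ≠ 0) ∧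
      (∀ k, ρ (1, 0) (v k) = lam • v (k + 1)) ∧
      (∀ k, ρ (-1, 0) (v k) = lam • v (k - 1)) := by
  classical
  set A := ρ (1, 0) with hAdef
  set B := ρ (-1, 0) with hBdef
  have h10 : ((1 : ℤ), (0 : ℤ)) ≠ (0, 0) := by simp
  have hm10 : ((-1 : ℤ), (0 : ℤ)) ≠ (0, 0) := by simp
  -- commutativity
  have hcomm : ∀ v : V, A (B v) = B (A v) := by
    intro v
    have h := hbr (1, 0) (-1, 0) h10 hm10
    rw [if_pos (by norm_num [Prod.ext_iff])] at h
    have h' := LinearMap.ext_iff.mp h v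
    simpa [sub_eq_zero] using h'
  -- membership maps
  have hAm : ∀ (n : ℤ) (v : V), v ∈ Vn n → A v ∈ Vn (n + 1) :=
    fun n v hv => hgr (1, 0) n h10 v hv
  have hBm : ∀ (n : ℤ) (v : V), v ∈ Vn n → B v ∈ Vn (n - 1) := by
    intro n v hv
    have := hgr (-1, 0) n hm10 v hv
    simpa [sub_eq_add_neg] using this
  -- nonvanishing of A and B
  have hB0 : ∀ (n : ℤ) (v : V), v ∈ Vn n → v ≠ 0 → B v ≠ 0 := by
    intro n v hv hv0 hc
    exact hnd n v hv hv0 (by rw [hc, map_zero])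
  have hA0 : ∀ (n : ℤ) (v : V), v ∈ Vn n → v ≠ 0 → A v ≠ 0 := by
    intro n v hv hv0 hc
    exact hnd n v hv hv0 (by rw [hcomm v, hc, map_zero])
  -- a nonzero vector
  obtain ⟨n0, hn0⟩ := hVne
  obtain ⟨v0, hv0m, hv00⟩ := (Vn n0).ne_bot_iff.mp hn0
  -- iterates
  have hFwd : ∀ n : ℕ, (A ^ n) v0 ∈ Vn (n0 + n) ∧ (A ^ n) v0 ≠ 0 := by
    intro n
    induction n with
    | zero => simpa using ⟨hv0m, hv00⟩
    | succ n ih =>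
      have h1 : (A ^ (n + 1)) v0 = A ((A ^ n) v0) := by
        rw [pow_succ']; rfl
      have hmem := hAm _ _ ih.1
      have hne := hA0 _ _ ih.1 ih.2
      constructor
      · rw [h1]
        have : (n0 + (↑(n + 1)) : ℤ) = n0 + n + 1 := by push_cast; ring
        rw [this]; exact hmem
      · rw [h1]; exact hne
  have hBwd : ∀ n : ℕ, (B ^ n) v0 ∈ Vn (n0 - n) ∧ (B ^ n) v0 ≠ 0 := by
    intro n
    induction n with
    | zero => simpa using ⟨hv0m, hv00⟩
    | succ n ih =>
      have h1 : (B ^ (n + 1)) v0 = B ((B ^ n) v0) := by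
        rw [pow_succ']; rfl
      have hmem := hBm _ _ ih.1
      have hne := hB0 _ _ ih.1 ih.2
      constructor
      · rw [h1]
        have : (n0 - (↑(n + 1)) : ℤ) = n0 - n - 1 := by push_cast; ring
        rw [this]; exact hmem
      · rw [h1]; exact hne
  -- the basis vectors (unnormalized)
  set w : ℤ → V := fun m =>
    if h : n0 ≤ m then (A ^ (m - n0).toNat) v0 else (B ^ (n0 - m).toNat) v0 with hwdef
  have hw : ∀ m : ℤ, w m ∈ Vn m ∧ w m ≠ 0 := by
    intro m
    by_cases h : n0 ≤ m
    · have hm : n0 + (((m - n0).toNat : ℕ) : ℤ) = m := by omega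
      have h2 := hFwd (m - n0).toNat
      rw [hm] at h2
      simpa [hwdef, h] using h2
    · have hm : n0 - (((n0 - m).toNat : ℕ) : ℤ) = m := by omega
      have h2 := hBwd (n0 - m).toNat
      rw [hm] at h2
      simpa [hwdef, h] using h2
  -- rank 1
  have hrank : ∀ n : ℤ, Module.rank ℂ (Vn n) = 1 := by
    intro n
    refine le_antisymm (hdim n) ?_
    have : Nontrivial (Vn n) :=
      ⟨⟨w n, (hw n).1⟩, 0, by simp [Subtype.ext_iff, (hw n).2]⟩
    exact Cardinal.one_le_iff_pos.mpr rank_pos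
  -- everything in Vn n is a multiple of w n
  have hscal : ∀ (n : ℤ) (x : V), x ∈ Vn n → ∃ c : ℂ, x = c • w n := by
    intro n x hx
    obtain ⟨v₀, hv₀⟩ := rank_le_one_iff.mp (hdim n)
    obtain ⟨r, hr⟩ := hv₀ ⟨w n, (hw n).1⟩
    obtain ⟨s, hs⟩ := hv₀ ⟨x, hx⟩
    have hr' : r • (v₀ : V) = w n := by
      have := congrArg Subtype.val hr; simpa using this
    have hs' : s • (v₀ : V) = x := by
      have := congrArg Subtype.val hs; simpa using this
    have hr0 : r ≠ 0 := by
      rintro rfl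
      exact (hw n).2 (by rw [← hr', zero_smul])
    refine ⟨s / r, ?_⟩
    rw [← hr', ← hs', smul_smul, div_mul_cancel₀ _ hr0]
  -- scalars a, b
  have haex : ∀ k : ℤ, ∃ c : ℂ, A (w k) = c • w (k + 1) :=
    fun k => hscal (k + 1) (A (w k)) (hAm k _ (hw k).1)
  have hbex : ∀ k : ℤ, ∃ c : ℂ, B (w k) = c • w (k - 1) :=
    fun k => hscal (k - 1) (B (w k)) (hBm k _ (hw k).1)
  set a : ℤ → ℂ := fun k => Classical.choose (haex k) with hadef
  set b : ℤ → ℂ := fun k => Classical.choose (hbex k) with hbdef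
  have ha : ∀ k, A (w k) = a k • w (k + 1) := fun k => Classical.choose_spec (haex k)
  have hb : ∀ k, B (w k) = b k • w (k - 1) := fun k => Classical.choose_spec (hbex k)
  have ha0 : ∀ k, a k ≠ 0 := by
    intro k hc
    exact hA0 k (w k) (hw k).1 (hw k).2 (by rw [ha k, hc, zero_smul])
  have hb0 : ∀ k, b k ≠ 0 := by
    intro k hc
    exact hB0 k (w k) (hw k).1 (hw k).2 (by rw [hb k, hc, zero_smul])
  -- the commutation relation on scalars
  have hrel : ∀ k : ℤ, a k * b (k + 1) = a (k - 1) * b k := by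
    intro k
    have h1 : B (A (w k)) = (a k * b (k + 1)) • w k := by
      rw [ha k, map_smul, hb (k + 1), smul_smul, add_sub_cancel_right]
    have h2 : A (B (w k)) = (b k * a (k - 1)) • w k := by
      rw [hb k, map_smul, ha (k - 1), smul_smul, sub_add_cancel]
    have h3 := hcomm (w k)
    rw [h1, h2] at h3
    have h4 : (b k * a (k - 1) - a k * b (k + 1)) • w k = 0 := by
      rw [sub_smul, h3, sub_self]
    rcases smul_eq_zero.mp h4 with h | h
    · linear_combination -h
    · exact absurd h (hw k).2
  -- the constant c
  set c : ℂ := a (-1) * b 0 with hcdef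
  have hconst : ∀ k : ℤ, a (k - 1) * b k = c := by
    intro k
    induction k using Int.induction_on with
    | zero => norm_num [hcdef]
    | succ n ih =>
      have := hrel n
      rw [show ((n : ℤ) + 1 - 1) = (n : ℤ) by ring] at *
      rw [this, ih]
    | pred n ih =>
      have := hrel (-(n : ℤ) - 1)
      rw [show (-(n : ℤ) - 1 + 1) = -(n : ℤ) by ring] at this
      rw [show (-(n : ℤ) - 1 - 1) = (-(n : ℤ) - 1) - 1 by ring]
      rw [← this]
      rw [show (-(n : ℤ) - 1) = -(n : ℤ) - 1 by ring] at ih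
      exact ih
  have hc0 : c ≠ 0 := mul_ne_zero (ha0 _) (hb0 _)
  -- square root
  obtain ⟨lam, hlam⟩ := IsAlgClosed.exists_pow_nat_eq c (n := 2) (by norm_num)
  have hlam0 : lam ≠ 0 := by
    rintro rfl; rw [zero_pow (by norm_num)] at hlam; exact hc0 hlam.symm
  -- normalization factors
  set g : ℤ → ℂ := fun k => a k / lam with hgdef
  have hg0 : ∀ k, g k ≠ 0 := fun k => div_ne_zero (ha0 k) hlam0
  set μ : ℤ → ℂ := zprodAux g with hμdef
  have hμ0 : ∀ k, μ k ≠ 0 := fun k => zprodAux_ne_zero g hg0 k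
  have hμs : ∀ k : ℤ, μ (k + 1) = (a k / lam) * μ k := fun k => zprodAux_succ g hg0 k
  refine ⟨hrank, lam, hlam0, fun k => μ k • w k, ?_, ?_, ?_, ?_⟩
  · exact fun k => Submodule.smul_mem _ _ (hw k).1
  · exact fun k => smul_ne_zero (hμ0 k) (hw k).2
  · intro k
    show A (μ k • w k) = lam • (μ (k + 1) • w (k + 1))
    rw [map_smul, ha k, smul_smul, smul_smul]
    congr 1
    rw [hμs k]
    field_simp
  · intro k
    show B (μ k • w k) = lam • (μ (k - 1) • w (k - 1))
    rw [map_smul, hb k, smul_smul, smul_smul]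
    congr 1
    have h1 : μ k = (a (k - 1) / lam) * μ (k - 1) := by
      have := hμs (k - 1)
      rwa [sub_add_cancel] at this
    have h2 : a (k - 1) * b k = lam ^ 2 := by rw [hconst k, ← hlam]
    rw [h1]
    field_simp
    linear_combination μ (k-1) * h2
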